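/- Let f, g, h : ℕ → ℝ be sequences of nonnegative real numbers, none of which is identically zero, such that [h] ≤ [f] and each of the complexity classes [f], [g], [h] is translation invariant. Then [h*g] ≤ [f*g]. -/

import Mathlib

open Filter Finset

/-- The discrete convolution (Cauchy product) of two sequences. -/
def conv (f g : ℕ → ℝ) : ℕ → ℝ := fun n => ∑ s ∈ Finset.range (n + 1), f s * g (n - s)

/-- `[f] = [g]`: there are constants `c₁, c₂ > 0` with
`c₁ g(n) ≤ f(n) ≤ c₂ g(n)` for all but finitely many `n`. -/
def SameClass (f g : ℕ → ℝ) : Prop :=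
  ∃ c₁ c₂ : ℝ, 0 < c₁ ∧ 0 < c₂ ∧
    ∀ᶠ n in Filter.atTop, c₁ * g n ≤ f n ∧ f n ≤ c₂ * g n

/-- `[f] ≤ [g]`: there is `c > 0` with `f(n) ≤ c g(n)` for all but finitely many `n`. -/
def ClassLE (f g : ℕ → ℝ) : Prop :=
  ∃ c : ℝ, 0 < c ∧ ∀ᶠ n in Filter.atTop, f n ≤ c * g n

/-- The complexity class `[f]` is translation invariant if `[n ↦ f(n+1)] = [f]`. -/
def TransInv (f : ℕ → ℝ) : Prop := SameClass (fun n => f (n + 1)) f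

lemma shift_pow_le {g : ℕ → ℝ} {b : ℝ} (hb : 0 < b) {K : ℕ}
    (H : ∀ m, K ≤ m → g (m + 1) ≤ b * g m) :
    ∀ j m, K ≤ m → g (m + j) ≤ b ^ j * g m := by
  intro j
  induction j with
  | zero => intro m _; simp
  | succ j ih =>
    intro m hm
    have h1 : m + (j + 1) = (m + j) + 1 := by omega
    rw [h1]
    have h2 : g ((m + j) + 1) ≤ b * g (m + j) := H _ (by omega)
    have h3 : g (m + j) ≤ b ^ j * g m := ih m hm
    calc g ((m + j) + 1) ≤ b * g (m + j) := h2
      _ ≤ b * (b ^ j * g m) := by nlinarith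
      _ = b ^ (j + 1) * g m := by ring

lemma shift_pow_ge {g : ℕ → ℝ} {a : ℝ} (ha : 0 < a) {K : ℕ}
    (H : ∀ m, K ≤ m → a * g m ≤ g (m + 1)) :
    ∀ j m, K ≤ m → a ^ j * g m ≤ g (m + j) := by
  intro j
  induction j with
  | zero => intro m _; simp
  | succ j ih =>
    intro m hm
    have h1 : m + (j + 1) = (m + j) + 1 := by omega
    rw [h1]
    have h2 : a * g (m + j) ≤ g ((m + j) + 1) := H _ (by omega)
    have h3 : a ^ j * g m ≤ g (m + j) := ih m hm
    calc a ^ (j + 1) * g m = a * (a ^ j * g m) := by ring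
      _ ≤ a * g (m + j) := by nlinarith
      _ ≤ g ((m + j) + 1) := h2

theorem conv_mono
    (f g h : ℕ → ℝ)
    (hf : ∀ n, 0 ≤ f n) (hg : ∀ n, 0 ≤ g n) (hh : ∀ n, 0 ≤ h n)
    (hfz : ¬ ∀ n, f n = 0) (hgz : ¬ ∀ n, g n = 0) (hhz : ¬ ∀ n, h n = 0)
    (hhf : ClassLE h f)
    (htf : TransInv f) (htg : TransInv g) (hth : TransInv h) :
    ClassLE (conv h g) (conv f g) := by
  obtain ⟨c, hc, hcf⟩ := hhf
  obtain ⟨Nc, hNc⟩ := Filter.eventually_atTop.mp hcf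
  obtain ⟨a, b, ha, hb, hev⟩ := htg
  obtain ⟨Kg, hKg⟩ := Filter.eventually_atTop.mp hev
  push_neg at hfz
  obtain ⟨n₀, hn₀⟩ := hfz
  have hfn₀ : 0 < f n₀ := (hf n₀).lt_of_ne (Ne.symm hn₀)
  set N := max Nc (n₀ + 1) with hNdef
  have hn₀N : n₀ < N := lt_of_lt_of_le (Nat.lt_succ_self n₀) (le_max_right _ _)
  have hNcN : Nc ≤ N := le_max_left _ _
  have hup : ∀ j m, Kg ≤ m → g (m + j) ≤ b ^ j * g m :=
    shift_pow_le hb (fun m hm => (hKg m hm).2)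
  have hdown : ∀ j m, Kg ≤ m → a ^ j * g m ≤ g (m + j) :=
    shift_pow_ge ha (fun m hm => (hKg m hm).1)
  set B := max b 1 with hBdef
  set A := min a 1 with hAdef
  have hA : 0 < A := lt_min ha one_pos
  have hA1 : A ≤ 1 := min_le_right _ _
  have hB1 : (1 : ℝ) ≤ B := le_max_right _ _
  set S := ∑ s ∈ Finset.range N, h s with hSdef
  have hS0 : 0 ≤ S := Finset.sum_nonneg fun i _ => hh i
  have hP : 0 < f n₀ * A ^ N := by positivity
  set Q := S * B ^ N / (f n₀ * A ^ N) with hQdef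
  have hQ0 : 0 ≤ Q := by positivity
  refine ⟨c + Q, by positivity, Filter.eventually_atTop.mpr ⟨N + Kg, fun n hn => ?_⟩⟩
  have hmK : Kg ≤ n - N := by omega
  have hNn : N ≤ n := by omega
  have hconvf0 : 0 ≤ conv f g n :=
    Finset.sum_nonneg fun i _ => mul_nonneg (hf i) (hg _)
  -- upper bound on g (n - s) for s < N
  have hgup : ∀ s, s < N → g (n - s) ≤ B ^ N * g (n - N) := by
    intro s hs
    have h1 : n - s = (n - N) + (N - s) := by omega
    rw [h1]
    have h2 : g ((n - N) + (N - s)) ≤ b ^ (N - s) * g (n - N) := hup _ _ hmK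
    have h3 : b ^ (N - s) ≤ B ^ N := by
      calc b ^ (N - s) ≤ B ^ (N - s) := pow_le_pow_left₀ hb.le (le_max_left _ _) _
        _ ≤ B ^ N := pow_le_pow_right₀ hB1 (by omega)
    have hg0 : 0 ≤ g (n - N) := hg _
    nlinarith
  -- lower bound: g (n - n₀) ≥ A ^ N * g (n - N)
  have hglow : A ^ N * g (n - N) ≤ g (n - n₀) := by
    have h1 : n - n₀ = (n - N) + (N - n₀) := by omega
    rw [h1]
    have h2 : a ^ (N - n₀) * g (n - N) ≤ g ((n - N) + (N - n₀)) := hdown _ _ hmK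
    have h3 : A ^ N ≤ a ^ (N - n₀) := by
      calc A ^ N ≤ A ^ (N - n₀) := pow_le_pow_of_le_one hA.le hA1 (by omega)
        _ ≤ a ^ (N - n₀) := pow_le_pow_left₀ hA.le (min_le_left _ _) _
    have hg0 : 0 ≤ g (n - N) := hg _
    nlinarith
  -- key: (f n₀ * A ^ N) * g (n - N) ≤ conv f g n
  have hkey : (f n₀ * A ^ N) * g (n - N) ≤ conv f g n := by
    have h1 : f n₀ * g (n - n₀) ≤ conv f g n := by
      exact Finset.single_le_sum (f := fun s => f s * g (n - s))
        (fun i _ => mul_nonneg (hf i) (hg _)) (Finset.mem_range.mpr (by omega))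
    nlinarith
  -- split the sum
  have hsplit : conv h g n = (∑ s ∈ Finset.range N, h s * g (n - s))
      + ∑ s ∈ Finset.Ico N (n + 1), h s * g (n - s) := by
    rw [conv]
    rw [Finset.range_eq_Ico, ← Finset.sum_Ico_consecutive _ (Nat.zero_le N) (by omega),
      ← Finset.range_eq_Ico]
  -- head bound
  have hhead : (∑ s ∈ Finset.range N, h s * g (n - s)) ≤ S * (B ^ N * g (n - N)) := by
    calc (∑ s ∈ Finset.range N, h s * g (n - s))
        ≤ ∑ s ∈ Finset.range N, h s * (B ^ N * g (n - N)) := by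
          refine Finset.sum_le_sum fun i hi => ?_
          exact mul_le_mul_of_nonneg_left (hgup i (Finset.mem_range.mp hi)) (hh i)
      _ = S * (B ^ N * g (n - N)) := by rw [hSdef, Finset.sum_mul]
  have hhead2 : S * (B ^ N * g (n - N)) ≤ Q * conv f g n := by
    have h1 : Q * ((f n₀ * A ^ N) * g (n - N)) ≤ Q * conv f g n :=
      mul_le_mul_of_nonneg_left hkey hQ0
    have h2 : Q * ((f n₀ * A ^ N) * g (n - N)) = S * (B ^ N * g (n - N)) := by
      rw [hQdef]; field_simp
    linarith
  -- tail bound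
  have htail : (∑ s ∈ Finset.Ico N (n + 1), h s * g (n - s)) ≤ c * conv f g n := by
    calc (∑ s ∈ Finset.Ico N (n + 1), h s * g (n - s))
        ≤ ∑ s ∈ Finset.Ico N (n + 1), c * (f s * g (n - s)) := by
          refine Finset.sum_le_sum fun i hi => ?_
          have hiN : N ≤ i := (Finset.mem_Ico.mp hi).1
          have := hNc i (le_trans hNcN hiN)
          have hg0 : 0 ≤ g (n - i) := hg _
          nlinarith
      _ ≤ ∑ s ∈ Finset.range (n + 1), c * (f s * g (n - s)) := by
          refine Finset.sum_le_sum_of_subset_of_nonneg ?_ fun i _ _ => ?_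
          · intro i hi
            exact Finset.mem_range.mpr (Finset.mem_Ico.mp hi).2
          · exact mul_nonneg hc.le (mul_nonneg (hf i) (hg _))
      _ = c * conv f g n := by rw [conv, Finset.mul_sum]
  calc conv h g n = (∑ s ∈ Finset.range N, h s * g (n - s))
      + ∑ s ∈ Finset.Ico N (n + 1), h s * g (n - s) := hsplit
    _ ≤ Q * conv f g n + c * conv f g n := by linarith
    _ = (c + Q) * conv f g n := by ring
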